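/- Under the same local expansion f(r) = f₀(r)(r−r_g)^a, N(r) = N₀(r)(r−r_g)^{b/2} with f₀, N₀ positive continuous at r_g, and for the anisotropic dispersion of degree n ≥ 2 (trajectory dt/dr ∝ 1/(√f · N^{1/n})), the integral ∫_r^{r₁} ds/(√(f(s)) N(s)^{1/n}) diverges as r → r_g⁺ if and only if a + b/n ≥ 2. -/

import Mathlib

open Filter

private lemma horizon_pointwise (n : ℕ) (a b f0 N0 t : ℝ) (hf : 0 < f0) (hN : 0 < N0)
    (ht : 0 < t) :
    1 / (Real.sqrt (f0 * t ^ a) * (N0 * t ^ (b / 2)) ^ ((1 : ℝ) / n))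
      = (1 / (Real.sqrt f0 * N0 ^ ((1 : ℝ) / n)))
        * t ^ (-(a / 2 + b / 2 * (1 / (n : ℝ)))) := by
  rw [Real.sqrt_mul hf.le, Real.mul_rpow hN.le (Real.rpow_nonneg ht.le _),
    Real.sqrt_eq_rpow (t ^ a), ← Real.rpow_mul ht.le, ← Real.rpow_mul ht.le,
    Real.rpow_neg ht.le, Real.rpow_add ht]
  have h1 : a * (1 / 2) = a / 2 := by ring
  have h2 : b / 2 * ((1 : ℝ) / n) = b / 2 * (1 / (n : ℝ)) := rfl
  rw [h1]
  ring

/-- Kiritsis–Kofinas horizon criterion for dispersion `F(ζ) = ζⁿ`, `n ≥ 2`: with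
`f(s) = f₀(s)(s − r_g)^a`, `N(s) = N₀(s)(s − r_g)^{b/2}` and `f₀, N₀` positive continuous on
`[r_g, r₁]`, `a, b ≥ 0`, the integral `∫_r^{r₁} ds/(√(f(s)) N(s)^{1/n})` diverges (tends to
`+∞`) as `r → r_g⁺` if and only if `a + b/n ≥ 2`. -/
theorem horizon_criterion_n (n : ℕ) (hn : 2 ≤ n) (rg r₁ a b : ℝ) (hr : rg < r₁)
    (ha : 0 ≤ a) (hb : 0 ≤ b) (f₀ N₀ : ℝ → ℝ)
    (hf₀ : ContinuousOn f₀ (Set.Icc rg r₁)) (hN₀ : ContinuousOn N₀ (Set.Icc rg r₁))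
    (hf₀pos : ∀ s ∈ Set.Icc rg r₁, 0 < f₀ s) (hN₀pos : ∀ s ∈ Set.Icc rg r₁, 0 < N₀ s) :
    Tendsto (fun r : ℝ => ∫ s in r..r₁,
        1 / (Real.sqrt (f₀ s * (s - rg) ^ a)
              * (N₀ s * (s - rg) ^ (b / 2)) ^ ((1 : ℝ) / n)))
      (nhdsWithin rg (Set.Ioi rg)) atTop
    ↔ 2 ≤ a + b / n := by
  have hnpos : (0 : ℝ) < n := by exact_mod_cast Nat.lt_of_lt_of_le Nat.zero_lt_two hn
  set g : ℝ → ℝ := fun s => 1 / (Real.sqrt (f₀ s) * (N₀ s) ^ ((1 : ℝ) / n)) with hg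
  set p : ℝ := a / 2 + b / 2 * (1 / (n : ℝ)) with hpdef
  have hp2 : p = (a + b / n) / 2 := by rw [hpdef]; ring
  -- continuity and bounds of g
  have hgcont : ContinuousOn g (Set.Icc rg r₁) := by
    apply continuousOn_const.div ((hf₀.sqrt).mul (hN₀.rpow_const ?_)) ?_
    · intro x hx; exact Or.inl (ne_of_gt (hN₀pos x hx))
    · intro x hx
      exact ne_of_gt (mul_pos (Real.sqrt_pos.mpr (hf₀pos x hx))
        (Real.rpow_pos_of_pos (hN₀pos x hx) _))
  have hgpos : ∀ s ∈ Set.Icc rg r₁, 0 < g s := fun s hs =>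
    div_pos one_pos (mul_pos (Real.sqrt_pos.mpr (hf₀pos s hs))
      (Real.rpow_pos_of_pos (hN₀pos s hs) _))
  have hcompact : IsCompact (Set.Icc rg r₁) := isCompact_Icc
  have hne : (Set.Icc rg r₁).Nonempty := Set.nonempty_Icc.mpr hr.le
  obtain ⟨x₁, hx₁, hmin'⟩ := hcompact.exists_isMinOn hne hgcont
  have hmin : ∀ y ∈ Set.Icc rg r₁, g x₁ ≤ g y := fun y hy => hmin' hy
  obtain ⟨x₂, hx₂, hmax'⟩ := hcompact.exists_isMaxOn hne hgcont
  have hmax : ∀ y ∈ Set.Icc rg r₁, g y ≤ g x₂ := fun y hy => hmax' hy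
  set c₁ : ℝ := g x₁ with hc₁
  set c₂ : ℝ := g x₂ with hc₂
  have hc₁pos : 0 < c₁ := hgpos x₁ hx₁
  have hc₂pos : 0 < c₂ := hgpos x₂ hx₂
  -- pointwise identity
  have key : ∀ s ∈ Set.Icc rg r₁, rg < s →
      1 / (Real.sqrt (f₀ s * (s - rg) ^ a)
            * (N₀ s * (s - rg) ^ (b / 2)) ^ ((1 : ℝ) / n))
        = g s * (s - rg) ^ (-p) := by
    intro s hs hlt
    exact horizon_pointwise n a b (f₀ s) (N₀ s) (s - rg) (hf₀pos s hs) (hN₀pos s hs)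
      (sub_pos.mpr hlt)
  -- rewrite the integral for r ∈ Ioo rg r₁
  have hInt_eq : ∀ r ∈ Set.Ioo rg r₁,
      (∫ s in r..r₁, 1 / (Real.sqrt (f₀ s * (s - rg) ^ a)
          * (N₀ s * (s - rg) ^ (b / 2)) ^ ((1 : ℝ) / n)))
        = ∫ s in r..r₁, g s * (s - rg) ^ (-p) := by
    intro r hrr
    apply intervalIntegral.integral_congr
    intro s hs
    rw [Set.uIcc_of_le hrr.2.le] at hs
    exact key s ⟨le_trans hrr.1.le hs.1, hs.2⟩ (lt_of_lt_of_le hrr.1 hs.1)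
  -- integrability of the g-form on subintervals [u, v] with rg < u
  have hIntegrable : ∀ u v : ℝ, rg < u → u ≤ v → v ≤ r₁ →
      IntervalIntegrable (fun s => g s * (s - rg) ^ (-p)) MeasureTheory.volume u v := by
    intro u v hu huv hv
    apply ContinuousOn.intervalIntegrable
    rw [Set.uIcc_of_le huv]
    apply ContinuousOn.mul
    · exact hgcont.mono (Set.Icc_subset_Icc hu.le hv)
    · apply ContinuousOn.rpow_const (continuousOn_id.sub continuousOn_const)
      intro x hx
      exact Or.inl (ne_of_gt (sub_pos.mpr (lt_of_lt_of_le hu hx.1)))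
  constructor
  · -- divergence → 2 ≤ a + b/n ; contrapositive
    intro H
    by_contra hcon
    push_neg at hcon
    have hplt : p < 1 := by rw [hp2]; linarith
    have hneg1 : (-1 : ℝ) < -p := by linarith
    -- integrability of (x - rg)^(-p) on [rg, r₁]
    have hrpow_int : IntervalIntegrable (fun x : ℝ => (x - rg) ^ (-p))
        MeasureTheory.volume rg r₁ := by
      have := (intervalIntegral.intervalIntegrable_rpow' (a := 0) (b := r₁ - rg)
        hneg1).comp_sub_right rg
      simpa using this
    set M : ℝ := c₂ * ∫ s in rg..r₁, (s - rg) ^ (-p) with hM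
    have hbound : ∀ r ∈ Set.Ioo rg r₁,
        (∫ s in r..r₁, g s * (s - rg) ^ (-p)) ≤ M := by
      intro r hrr
      have h1 : (∫ s in r..r₁, g s * (s - rg) ^ (-p))
          ≤ ∫ s in r..r₁, c₂ * (s - rg) ^ (-p) := by
        apply intervalIntegral.integral_mono_on hrr.2.le
          (hIntegrable r r₁ hrr.1 hrr.2.le le_rfl)
          ((hrpow_int.const_mul c₂).mono_set
            (Set.uIcc_subset_uIcc_iff_le.mpr
              ⟨by rw [min_eq_left hrr.2.le, min_eq_left hr.le]; exact hrr.1.le,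
               by rw [max_eq_right hrr.2.le, max_eq_right hr.le]⟩))
        intro x hx
        have hx' : x ∈ Set.Icc rg r₁ := ⟨le_trans hrr.1.le hx.1, hx.2⟩
        exact mul_le_mul_of_nonneg_right (hmax x hx')
          (Real.rpow_nonneg (sub_nonneg.mpr hx'.1) _)
      have h2 : (∫ s in r..r₁, c₂ * (s - rg) ^ (-p))
          = c₂ * ∫ s in r..r₁, (s - rg) ^ (-p) := intervalIntegral.integral_const_mul _ _
      have h3 : (∫ s in r..r₁, (s - rg) ^ (-p)) ≤ ∫ s in rg..r₁, (s - rg) ^ (-p) := by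
        apply intervalIntegral.integral_mono_interval hrr.1.le hrr.2.le le_rfl ?_ hrpow_int
        filter_upwards [MeasureTheory.ae_restrict_mem measurableSet_Ioc] with x hx
        exact Real.rpow_nonneg (sub_nonneg.mpr hx.1.le) _
      calc (∫ s in r..r₁, g s * (s - rg) ^ (-p)) ≤ c₂ * ∫ s in r..r₁, (s - rg) ^ (-p) := by
            rw [← h2]; exact h1
        _ ≤ M := by rw [hM]; exact mul_le_mul_of_nonneg_left h3 hc₂pos.le
    have hev1 : ∀ᶠ r in nhdsWithin rg (Set.Ioi rg), M < (∫ s in r..r₁,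
        1 / (Real.sqrt (f₀ s * (s - rg) ^ a)
              * (N₀ s * (s - rg) ^ (b / 2)) ^ ((1 : ℝ) / n))) :=
      H.eventually_gt_atTop M
    have hev2 : ∀ᶠ r in nhdsWithin rg (Set.Ioi rg), r ∈ Set.Ioo rg r₁ :=
      Ioo_mem_nhdsGT_of_mem ⟨le_rfl, hr⟩
    obtain ⟨r, h1, h2⟩ := (hev1.and hev2).exists
    rw [hInt_eq r h2] at h1
    exact absurd (hbound r h2) (not_le.mpr h1)
  · -- 2 ≤ a + b/n → divergence
    intro hcrit
    have hp1 : 1 ≤ p := by rw [hp2]; linarith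
    set m : ℝ := min (rg + 1) r₁ with hm
    have hm1 : rg < m := lt_min (by linarith) hr
    have hm2 : m ≤ r₁ := min_le_right _ _
    have hm3 : m - rg ≤ 1 := by
      have := min_le_left (rg + 1) r₁; linarith
    -- lower bound function
    have hlog : Tendsto (fun r : ℝ => c₁ * Real.log ((m - rg) / (r - rg)))
        (nhdsWithin rg (Set.Ioi rg)) atTop := by
      apply Tendsto.const_mul_atTop hc₁pos
      have hsub : Tendsto (fun r : ℝ => r - rg) (nhdsWithin rg (Set.Ioi rg))
          (nhdsWithin 0 (Set.Ioi 0)) := by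
        rw [tendsto_nhdsWithin_iff]
        constructor
        · have : Tendsto (fun r : ℝ => r - rg) (nhds rg) (nhds (rg - rg)) :=
            (continuous_id.sub continuous_const).tendsto rg
          rw [sub_self] at this
          exact this.mono_left nhdsWithin_le_nhds
        · filter_upwards [self_mem_nhdsWithin] with r hrr
          exact Set.mem_Ioi.mpr (sub_pos.mpr (Set.mem_Ioi.mp hrr))
      have hlogbot : Tendsto (fun r : ℝ => Real.log (r - rg))
          (nhdsWithin rg (Set.Ioi rg)) atBot :=
        Real.tendsto_log_nhdsGT_zero.comp hsub
      have hneg : Tendsto (fun r : ℝ => Real.log (m - rg) - Real.log (r - rg))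
          (nhdsWithin rg (Set.Ioi rg)) atTop := by
        apply tendsto_atTop_add_const_left
        exact tendsto_neg_atBot_atTop.comp hlogbot
      apply hneg.congr'
      filter_upwards [self_mem_nhdsWithin] with r hrr
      rw [Real.log_div (ne_of_gt (sub_pos.mpr hm1)) (ne_of_gt (sub_pos.mpr (Set.mem_Ioi.mp hrr)))]
    apply tendsto_atTop_mono' _ _ hlog
    filter_upwards [Ioo_mem_nhdsGT_of_mem (Set.mem_Ico.mpr ⟨le_rfl, hm1⟩)] with r hrr
    have hrm : r < m := hrr.2
    have hrrg : rg < r := hrr.1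
    have hrr₁ : r ∈ Set.Ioo rg r₁ := ⟨hrrg, lt_of_lt_of_le hrm hm2⟩
    rw [hInt_eq r hrr₁]
    -- split the integral at m
    have hi1 : IntervalIntegrable (fun s => g s * (s - rg) ^ (-p))
        MeasureTheory.volume r m := hIntegrable r m hrrg hrm.le hm2
    have hi2 : IntervalIntegrable (fun s => g s * (s - rg) ^ (-p))
        MeasureTheory.volume m r₁ := hIntegrable m r₁ hm1 hm2 le_rfl
    rw [← intervalIntegral.integral_add_adjacent_intervals hi1 hi2]
    have htail : 0 ≤ ∫ s in m..r₁, g s * (s - rg) ^ (-p) := by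
      apply intervalIntegral.integral_nonneg hm2
      intro x hx
      have hx' : x ∈ Set.Icc rg r₁ := ⟨le_trans hm1.le hx.1, hx.2⟩
      exact mul_nonneg (hgpos x hx').le (Real.rpow_nonneg (sub_nonneg.mpr hx'.1) _)
    have hhead : c₁ * Real.log ((m - rg) / (r - rg))
        ≤ ∫ s in r..m, g s * (s - rg) ^ (-p) := by
      have heq : (∫ s in r..m, c₁ * (s - rg)⁻¹)
          = c₁ * Real.log ((m - rg) / (r - rg)) := by
        rw [intervalIntegral.integral_const_mul]
        congr 1
        have := intervalIntegral.integral_comp_sub_right (a := r) (b := m)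
          (fun x : ℝ => x⁻¹) rg
        rw [this, integral_inv]
        intro hmem
        rw [Set.mem_uIcc] at hmem
        rcases hmem with h | h
        · linarith [sub_pos.mpr hrrg, h.1]
        · linarith [sub_pos.mpr hm1, h.1]
      rw [← heq]
      apply intervalIntegral.integral_mono_on hrm.le ?_ hi1
      · intro x hx
        have hxg : rg < x := lt_of_lt_of_le hrrg hx.1
        have hx' : x ∈ Set.Icc rg r₁ := ⟨hxg.le, le_trans hx.2 hm2⟩
        have hxle1 : x - rg ≤ 1 := by linarith [hx.2]
        have h1 : (x - rg)⁻¹ ≤ (x - rg) ^ (-p) := by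
          rw [← Real.rpow_neg_one]
          exact Real.rpow_le_rpow_of_exponent_ge (sub_pos.mpr hxg) hxle1 (by linarith)
        have h2 : c₁ ≤ g x := hmin x hx'
        calc c₁ * (x - rg)⁻¹ ≤ g x * (x - rg)⁻¹ :=
              mul_le_mul_of_nonneg_right h2 (inv_nonneg.mpr (sub_pos.mpr hxg).le)
          _ ≤ g x * (x - rg) ^ (-p) :=
              mul_le_mul_of_nonneg_left h1 (hgpos x hx').le
      · apply ContinuousOn.intervalIntegrable
        rw [Set.uIcc_of_le hrm.le]
        apply ContinuousOn.mul continuousOn_const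
        apply ContinuousOn.inv₀ (continuousOn_id.sub continuousOn_const)
        intro x hx
        exact ne_of_gt (sub_pos.mpr (lt_of_lt_of_le hrrg hx.1))
    linarith
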